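/- arXiv:2112.02377 — 3 statements merged into one kernel-verified Lean document; each statement's English description precedes it below -/
import Mathlib

section
/- Let A be an invertible n×n complex matrix, let A = M − N be a splitting of A with M invertible, and set T = M⁻¹N and c = M⁻¹b for a right-hand side b ∈ ℂⁿ. Then the iteration x⁽ᵏ⁺¹⁾ = T x⁽ᵏ⁾ + c converges to the exact solution x* = A⁻¹b for every initial guess x⁽⁰⁾ ∈ ℂⁿ if and only if the spectral radius of T is strictly less than 1. -/
open Matrix Filter Topology

attribute [local instance] Matrix.linftyOpNormedRing Matrix.linftyOpNormedAlgebra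

/-- Convergence of the stationary iteration `x⁽ᵏ⁺¹⁾ = T x⁽ᵏ⁾ + c` to `x* = A⁻¹ b`
for every initial guess is equivalent to `ρ(T) < 1`. -/
theorem stationary_iteration_tendsto_iff_spectralRadius_lt_one
    (n : ℕ) (A M N : Matrix (Fin n) (Fin n) ℂ) (b : Fin n → ℂ)
    (hA : IsUnit A.det) (hM : IsUnit M.det) (hsplit : A = M - N)
    (T : Matrix (Fin n) (Fin n) ℂ) (hT : T = M⁻¹ * N)
    (c : Fin n → ℂ) (hc : c = M⁻¹.mulVec b) :
    (∀ x : ℕ → Fin n → ℂ,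
        (∀ k, x (k + 1) = T.mulVec (x k) + c) →
        Tendsto x atTop (𝓝 (A⁻¹.mulVec b))) ↔
      spectralRadius ℂ T < 1 := by
  set xs : Fin n → ℂ := A⁻¹.mulVec b with hxs
  have hb : A.mulVec xs = b := by
    rw [hxs, mulVec_mulVec, Matrix.mul_nonsing_inv A hA, one_mulVec]
  have hfix : T.mulVec xs + c = xs := by
    rw [hT, hc, ← mulVec_mulVec, ← mulVec_add, ← hb, ← add_mulVec]
    have : N + A = M := by rw [hsplit]; abel
    rw [this, mulVec_mulVec, Matrix.nonsing_inv_mul M hM, one_mulVec]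
  constructor
  · intro H
    -- every element of the spectrum has norm < 1
    have key : ∀ μ ∈ spectrum ℂ T, ‖μ‖₊ < 1 := by
      intro μ hμ
      rw [spectrum.mem_iff] at hμ
      have hdet : (algebraMap ℂ (Matrix (Fin n) (Fin n) ℂ) μ - T).det = 0 := by
        by_contra hdet
        exact hμ ((Matrix.isUnit_iff_isUnit_det _).2 (isUnit_iff_ne_zero.2 hdet))
      obtain ⟨v, hv0, hv⟩ := (Matrix.exists_mulVec_eq_zero_iff).2 hdet
      have hev : T.mulVec v = μ • v := by
        have := hv
        rw [sub_mulVec] at this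
        have h1 : (algebraMap ℂ (Matrix (Fin n) (Fin n) ℂ) μ).mulVec v = μ • v := by
          simp [Algebra.algebraMap_eq_smul_one, smul_mulVec, one_mulVec]
        rw [h1, sub_eq_zero] at this
        exact this.symm
      -- build the iteration sequence
      set x : ℕ → Fin n → ℂ := fun k => μ ^ k • v + xs with hx
      have hrec : ∀ k, x (k + 1) = T.mulVec (x k) + c := by
        intro k
        rw [hx]
        simp only []
        rw [mulVec_add, mulVec_smul, hev, add_assoc, hfix, smul_smul, ← pow_succ]
      have hconv := H x hrec
      have hzero : Tendsto (fun k : ℕ => μ ^ k • v) atTop (𝓝 0) := by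
        have := hconv.sub_const xs
        simpa [hx] using this
      by_contra hge
      push_neg at hge
      obtain ⟨i, hi⟩ : ∃ i, v i ≠ 0 := by
        by_contra h
        push_neg at h
        exact hv0 (funext h)
      have hzi : Tendsto (fun k : ℕ => μ ^ k * v i) atTop (𝓝 0) :=
        (continuous_apply i).continuousAt.tendsto.comp hzero |>.congr (fun k => rfl)
      have hnorm : Tendsto (fun k : ℕ => ‖μ ^ k * v i‖) atTop (𝓝 0) := by
        simpa using hzi.norm
      have hlb : ∀ k, ‖v i‖ ≤ ‖μ ^ k * v i‖ := by
        intro k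
        rw [norm_mul, norm_pow]
        have h1 : (1 : ℝ) ≤ ‖μ‖ ^ k := one_le_pow₀ (by exact_mod_cast hge)
        nlinarith [norm_nonneg (v i), norm_pos_iff.2 hi]
      have : ‖v i‖ ≤ 0 := le_of_tendsto_of_tendsto tendsto_const_nhds hnorm
        (Eventually.of_forall hlb)
      exact absurd (le_antisymm this (norm_nonneg _)) (norm_ne_zero_iff.2 hi)
    rcases Set.eq_empty_or_nonempty (spectrum ℂ T) with he | hne
    · rw [spectralRadius, he]
      simp
    · exact spectrum.spectralRadius_lt_of_forall_lt_of_nonempty hne key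
  · intro hρ x hrec
    -- x k = T^k (x 0 - xs) + xs
    have hform : ∀ k, x k = (T ^ k).mulVec (x 0 - xs) + xs := by
      intro k
      induction k with
      | zero => simp
      | succ k ih =>
        rw [hrec k, ih, mulVec_add, pow_succ', ← mulVec_mulVec, add_assoc, hfix]
    -- ‖T^k‖ → 0
    obtain ⟨r, hρr, hr1⟩ : ∃ r : NNReal, spectralRadius ℂ T < r ∧ r < 1 := by
      obtain ⟨u, hu1, hu2⟩ := exists_between hρ
      lift u to NNReal using (hu2.trans_le le_top).ne
      exact ⟨u, hu1, by exact_mod_cast hu2⟩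
    have hgel := spectrum.pow_nnnorm_pow_one_div_tendsto_nhds_spectralRadius T
    have hev : ∀ᶠ k : ℕ in atTop, ((‖T ^ k‖₊ : ENNReal) ^ (1 / (k : ℝ))) < r :=
      hgel.eventually_lt_const hρr
    have hnorm0 : Tendsto (fun k : ℕ => ‖T ^ k‖) atTop (𝓝 0) := by
      have hb : ∀ᶠ k : ℕ in atTop, ‖T ^ k‖ ≤ (r : ℝ) ^ k := by
        filter_upwards [hev, eventually_ge_atTop 1] with k hk hk1
        have hknz : (k : ℝ) ≠ 0 := Nat.cast_ne_zero.2 (by omega)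
        have h := ENNReal.rpow_le_rpow hk.le (Nat.cast_nonneg k : (0:ℝ) ≤ (k:ℝ))
        rw [← ENNReal.rpow_mul, one_div, inv_mul_cancel₀ hknz, ENNReal.rpow_one,
          ENNReal.rpow_natCast] at h
        have h3 : ‖T ^ k‖₊ ≤ r ^ k := by exact_mod_cast h
        exact_mod_cast h3
      have hg : Tendsto (fun k : ℕ => (r : ℝ) ^ k) atTop (𝓝 0) :=
        tendsto_pow_atTop_nhds_zero_of_lt_one r.coe_nonneg (by exact_mod_cast hr1)
      exact squeeze_zero' (Eventually.of_forall fun k => norm_nonneg _) hb hg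
    have hmv : Tendsto (fun k : ℕ => (T ^ k).mulVec (x 0 - xs)) atTop (𝓝 0) := by
      rw [tendsto_zero_iff_norm_tendsto_zero]
      have hb2 : ∀ k : ℕ, ‖(T ^ k).mulVec (x 0 - xs)‖ ≤ ‖T ^ k‖ * ‖x 0 - xs‖ :=
        fun k => Matrix.linfty_opNorm_mulVec _ _
      exact squeeze_zero (fun k => norm_nonneg _) hb2 (by simpa using hnorm0.mul_const _)
    have := hmv.add_const xs
    rw [zero_add] at this
    exact this.congr fun k => (hform k).symm
end

section
/- Let A be an n×n complex matrix that is strictly diagonally dominant by rows, let b ∈ ℂⁿ, let D be the diagonal part of A, and let L and U be its strictly lower and upper triangular parts. Then for every initial guess u⁽⁰⁾ ∈ ℂⁿ, the Jacobi iterates u⁽ᵏ⁺¹⁾ = D⁻¹(b − (L+U)u⁽ᵏ⁾) converge to the unique solution u* of A u = b. -/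
open Matrix Filter Topology
open scoped NNReal

attribute [local instance] Matrix.linftyOpSeminormedAddCommGroup

/-- For a strictly row-diagonally dominant complex matrix `A`, the system `A u = b`
has a unique solution `u*`, and for every initial guess the Jacobi iterates
`u⁽ᵏ⁺¹⁾ = D⁻¹(b − (L+U)u⁽ᵏ⁾)` converge to `u*`. -/
theorem jacobi_iterates_tendsto_solution_of_diagonally_dominant
    (n : ℕ) (A : Matrix (Fin n) (Fin n) ℂ) (b : Fin n → ℂ)
    (hdom : ∀ i, ∑ j ∈ Finset.univ.erase i, ‖A i j‖ < ‖A i i‖)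
    (D L U : Matrix (Fin n) (Fin n) ℂ)
    (hD : D = Matrix.diagonal fun i => A i i)
    (hL : L = Matrix.of fun i j => if j < i then A i j else 0)
    (hU : U = Matrix.of fun i j => if i < j then A i j else 0)
    (u : ℕ → Fin n → ℂ)
    (hu : ∀ k, u (k + 1) = D⁻¹.mulVec (b - (L + U).mulVec (u k))) :
    (∃! ustar : Fin n → ℂ, A.mulVec ustar = b) ∧
      ∀ ustar : Fin n → ℂ, A.mulVec ustar = b → Tendsto u atTop (𝓝 ustar) := by
  classical
  have hdiag : ∀ i, A i i ≠ 0 := by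
    intro i h
    have h1 := hdom i
    rw [h, norm_zero] at h1
    exact absurd h1 (not_lt.mpr (Finset.sum_nonneg fun j _ => norm_nonneg _))
  have hdet : IsUnit A.det :=
    Ne.isUnit (det_ne_zero_of_sum_row_lt_diag hdom)
  -- basic facts about D
  have hDdet : IsUnit D.det := by
    rw [hD, Matrix.det_diagonal]
    exact Ne.isUnit (Finset.prod_ne_zero_iff.mpr fun i _ => hdiag i)
  have hDl : D⁻¹ * D = 1 := Matrix.nonsing_inv_mul D hDdet
  have hDinv : D⁻¹ = Matrix.diagonal fun i => (A i i)⁻¹ := by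
    refine Matrix.inv_eq_left_inv ?_
    rw [hD, Matrix.diagonal_mul_diagonal]
    have he : (fun i => (A i i)⁻¹ * A i i) = fun _ => (1:ℂ) :=
      funext fun i => inv_mul_cancel₀ (hdiag i)
    rw [he, Matrix.diagonal_one]
  -- entries of L + U
  have hLU : ∀ i j, (L + U) i j = if j = i then 0 else A i j := by
    intro i j
    rw [Matrix.add_apply, hL, hU]
    rcases lt_trichotomy j i with h | h | h
    · simp [h, h.ne, not_lt_of_gt h, h.ne']
    · simp [h]
    · simp [h, h.ne', not_lt_of_gt h]
  -- the Jacobi iteration matrix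
  set B : Matrix (Fin n) (Fin n) ℂ := D⁻¹ * (L + U) with hBdef
  have hBentry : ∀ i j, B i j = (A i i)⁻¹ * (L + U) i j := by
    intro i j
    rw [hBdef, hDinv, Matrix.diagonal_mul]
  have hrow : ∀ i, ∑ j, ‖B i j‖ < 1 := by
    intro i
    have hAii : (0:ℝ) < ‖A i i‖ := norm_pos_iff.mpr (hdiag i)
    have hsum : ∑ j, ‖B i j‖ = (∑ j ∈ Finset.univ.erase i, ‖A i j‖) * ‖A i i‖⁻¹ := by
      rw [Finset.sum_mul]
      rw [← Finset.sum_erase (Finset.univ) (a := i)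
        (by rw [hBentry, hLU]; simp)]
      refine Finset.sum_congr rfl fun j hj => ?_
      have hji : j ≠ i := Finset.ne_of_mem_erase hj
      rw [hBentry, hLU, if_neg hji, norm_mul, norm_inv]
      ring
    rw [hsum, ← div_eq_mul_inv, div_lt_one hAii]
    exact hdom i
  have hBnorm : ‖B‖ < 1 := by
    rw [Matrix.linfty_opNorm_def]
    rw [← NNReal.coe_one, NNReal.coe_lt_coe]
    have hbot : (⊥ : ℝ≥0) < 1 := by
      rw [bot_lt_iff_ne_bot]
      exact one_ne_zero
    refine (Finset.sup_lt_iff hbot).mpr fun i _ => ?_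
    rw [← NNReal.coe_lt_coe]
    push_cast [coe_nnnorm]
    exact hrow i
  -- existence and uniqueness
  have hAl : A⁻¹ * A = 1 := Matrix.nonsing_inv_mul A hdet
  have hAr : A * A⁻¹ = 1 := Matrix.mul_nonsing_inv A hdet
  refine ⟨⟨A⁻¹.mulVec b, ?_, ?_⟩, ?_⟩
  · show A.mulVec (A⁻¹.mulVec b) = b
    rw [Matrix.mulVec_mulVec, hAr, Matrix.one_mulVec]
  · intro x hx
    rw [← hx, Matrix.mulVec_mulVec, hAl, Matrix.one_mulVec]
  -- convergence
  intro ustar hstar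
  have hADLU : A = D + (L + U) := by
    ext i j
    rw [Matrix.add_apply, hLU, hD]
    rcases eq_or_ne j i with h | h
    · subst h; simp
    · simp [Matrix.diagonal_apply_ne' _ h, h]
  have hDfix : D.mulVec ustar = b - (L + U).mulVec ustar := by
    rw [hADLU, Matrix.add_mulVec] at hstar
    exact eq_sub_of_add_eq hstar
  have hfix : ustar = D⁻¹.mulVec (b - (L + U).mulVec ustar) := by
    rw [← hDfix, Matrix.mulVec_mulVec, hDl, Matrix.one_mulVec]
  have herr : ∀ k, u (k + 1) - ustar = -(B.mulVec (u k - ustar)) := by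
    intro k
    calc u (k + 1) - ustar
        = D⁻¹.mulVec (b - (L + U).mulVec (u k))
            - D⁻¹.mulVec (b - (L + U).mulVec ustar) := by rw [hu k, ← hfix]
      _ = D⁻¹.mulVec ((b - (L + U).mulVec (u k)) - (b - (L + U).mulVec ustar)) :=
          (Matrix.mulVec_sub _ _ _).symm
      _ = D⁻¹.mulVec (-((L + U).mulVec (u k - ustar))) := by
          have hveq : (b - (L + U).mulVec (u k)) - (b - (L + U).mulVec ustar)
              = -((L + U).mulVec (u k - ustar)) := by
            rw [Matrix.mulVec_sub]
            abel
          rw [hveq]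
      _ = -(B.mulVec (u k - ustar)) := by
          rw [Matrix.mulVec_neg, Matrix.mulVec_mulVec]
  have hbound : ∀ k, ‖u k - ustar‖ ≤ ‖B‖ ^ k * ‖u 0 - ustar‖ := by
    intro k
    induction k with
    | zero => simp
    | succ k ih =>
      rw [herr k, norm_neg]
      calc ‖B.mulVec (u k - ustar)‖ ≤ ‖B‖ * ‖u k - ustar‖ :=
            Matrix.linfty_opNorm_mulVec _ _
        _ ≤ ‖B‖ * (‖B‖ ^ k * ‖u 0 - ustar‖) :=
            mul_le_mul_of_nonneg_left ih (norm_nonneg _)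
        _ = ‖B‖ ^ (k + 1) * ‖u 0 - ustar‖ := by ring
  rw [tendsto_iff_norm_sub_tendsto_zero]
  have h0 : Tendsto (fun k => ‖B‖ ^ k * ‖u 0 - ustar‖) atTop (𝓝 0) := by
    simpa using
      (tendsto_pow_atTop_nhds_zero_of_lt_one (norm_nonneg B) hBnorm).mul_const ‖u 0 - ustar‖
  exact squeeze_zero (fun k => norm_nonneg _) hbound h0
end

section
/- Let A be an invertible n×n complex matrix, let A = M − N be a splitting of A with M invertible, set T = M⁻¹N and c = M⁻¹b, let x* = A⁻¹b, and let x⁽ᵏ⁾ be defined by x⁽ᵏ⁺¹⁾ = T x⁽ᵏ⁾ + c from an initial guess x⁽⁰⁾. Then limsup_{k→∞} ‖x⁽ᵏ⁾ − x*‖^{1/k} ≤ ρ(T), where ρ(T) is the spectral radius of T; i.e., the asymptotic linear convergence factor of the iteration is at most ρ(T). -/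
open Matrix Filter Topology

attribute [local instance] Matrix.linftyOpNormedRing Matrix.linftyOpNormedAlgebra

/-- Asymptotic convergence factor of a stationary iterative method:
`limsup_{k→∞} ‖x⁽ᵏ⁾ − x*‖^{1/k} ≤ ρ(T)`. -/
theorem stationary_iteration_limsup_rpow_le_spectralRadius
    (n : ℕ) (A M N : Matrix (Fin n) (Fin n) ℂ) (b : Fin n → ℂ)
    (hA : IsUnit A.det) (hM : IsUnit M.det) (hsplit : A = M - N)
    (T : Matrix (Fin n) (Fin n) ℂ) (hT : T = M⁻¹ * N)
    (c : Fin n → ℂ) (hc : c = M⁻¹.mulVec b)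
    (xstar : Fin n → ℂ) (hxstar : xstar = A⁻¹.mulVec b)
    (x : ℕ → Fin n → ℂ) (hx : ∀ k, x (k + 1) = T.mulVec (x k) + c) :
    Filter.limsup
        (fun k : ℕ => (‖x k - xstar‖₊ : ENNReal) ^ (1 / (k : ℝ))) atTop ≤
      spectralRadius ℂ T := by
  -- x* is a fixed point of the iteration
  have hAx : A.mulVec xstar = b := by
    rw [hxstar, Matrix.mulVec_mulVec, Matrix.mul_nonsing_inv A hA, Matrix.one_mulVec]
  have hfix : T.mulVec xstar + c = xstar := by
    have h1 : M.mulVec xstar = N.mulVec xstar + b := by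
      rw [← hAx, hsplit, Matrix.sub_mulVec]
      abel
    have := congrArg (M⁻¹.mulVec) h1
    rw [Matrix.mulVec_mulVec, Matrix.nonsing_inv_mul M hM, Matrix.one_mulVec,
      Matrix.mulVec_add] at this
    rw [hT, hc, ← Matrix.mulVec_mulVec, ← this]
  -- error propagation
  have he : ∀ k, x k - xstar = (T ^ k).mulVec (x 0 - xstar) := by
    intro k
    induction k with
    | zero => simp
    | succ k ih =>
      rw [hx k, pow_succ', ← Matrix.mulVec_mulVec, ← ih, Matrix.mulVec_sub]
      conv_lhs => rw [← hfix]
      abel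
  set C : NNReal := ‖x 0 - xstar‖₊ with hC
  have hbound : ∀ k, (‖x k - xstar‖₊ : ENNReal) ^ (1 / (k : ℝ)) ≤
      ((‖T ^ k‖₊ : ENNReal) ^ (1 / (k : ℝ))) * ((C : ENNReal) ^ (1 / (k : ℝ))) := by
    intro k
    rw [← ENNReal.mul_rpow_of_nonneg _ _ (by positivity)]
    apply ENNReal.rpow_le_rpow _ (by positivity)
    rw [← ENNReal.coe_mul]
    exact_mod_cast (he k ▸ Matrix.linfty_opNNNorm_mulVec (T ^ k) (x 0 - xstar))
  by_cases hC0 : C = 0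
  · refine limsup_le_of_le (by isBoundedDefault) ?_
    filter_upwards [eventually_ge_atTop 1] with k hk
    have : ‖x k - xstar‖₊ = 0 := by
      refine le_antisymm ?_ zero_le
      calc ‖x k - xstar‖₊ ≤ ‖T ^ k‖₊ * C := he k ▸ Matrix.linfty_opNNNorm_mulVec _ _
        _ = 0 := by rw [hC0, mul_zero]
    rw [this]
    simp only [ENNReal.coe_zero]
    rw [ENNReal.zero_rpow_of_pos (by positivity)]
    exact zero_le
  · have htend : Tendsto (fun k : ℕ => (C : ENNReal) ^ (1 / (k : ℝ))) atTop (𝓝 1) := by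
      have h1 : Tendsto (fun k : ℕ => C ^ (1 / (k : ℝ))) atTop (𝓝 1) := by
        have := (NNReal.continuousAt_rpow (x := C) (y := 0) (Or.inl hC0)).tendsto.comp
          (tendsto_const_nhds.prodMk_nhds tendsto_one_div_atTop_nhds_zero_nat)
        simpa [NNReal.rpow_zero, Function.comp_def] using this
      have h2 : Tendsto (fun k : ℕ => ((C ^ (1 / (k : ℝ)) : NNReal) : ENNReal)) atTop
          (𝓝 (1 : ENNReal)) := by
        rw [← ENNReal.coe_one]
        exact ENNReal.tendsto_coe.mpr h1
      convert h2 using 2 with k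
      exact ENNReal.coe_rpow_of_ne_zero hC0 _ |>.symm
    have hlimC : Filter.limsup (fun k : ℕ => (C : ENNReal) ^ (1 / (k : ℝ))) atTop = 1 :=
      htend.limsup_eq
    calc Filter.limsup (fun k : ℕ => (‖x k - xstar‖₊ : ENNReal) ^ (1 / (k : ℝ))) atTop
        ≤ Filter.limsup (fun k : ℕ => ((‖T ^ k‖₊ : ENNReal) ^ (1 / (k : ℝ))) *
            ((C : ENNReal) ^ (1 / (k : ℝ)))) atTop :=
          limsup_le_limsup (Eventually.of_forall hbound)
      _ ≤ Filter.limsup (fun k : ℕ => (‖T ^ k‖₊ : ENNReal) ^ (1 / (k : ℝ))) atTop *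
            Filter.limsup (fun k : ℕ => (C : ENNReal) ^ (1 / (k : ℝ))) atTop :=
          by
            have hlim : Filter.limsup (fun k : ℕ => (C : ENNReal) ^ (1 / (k : ℝ))) atTop ≠ 0 ∧
                Filter.limsup (fun k : ℕ => (C : ENNReal) ^ (1 / (k : ℝ))) atTop ≠ ⊤ := by
              constructor <;> · rw [hlimC] ; simp
            exact ENNReal.limsup_mul_le' (Or.inr hlim.2) (Or.inr hlim.1)
      _ ≤ spectralRadius ℂ T * 1 :=
          mul_le_mul' (spectrum.limsup_pow_nnnorm_pow_one_div_le_spectralRadius T)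
            (le_of_eq hlimC)
      _ = spectralRadius ℂ T := mul_one _
end
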